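/- If H is a subgroup of PGL(2,ℤ) of order 4 that contains the element [T], then H equals the subgroup G₄ generated by [S] and [N]. -/

import Mathlib

open Matrix

abbrev GL2Z := GL (Fin 2) ℤ

/-- PGL(2,ℤ): the quotient of GL(2,ℤ) by its center {I, -I}. -/
abbrev PGL2Z := GL2Z ⧸ Subgroup.center GL2Z

/-- The image of a matrix in PGL(2,ℤ). -/
def cls (M : GL2Z) : PGL2Z := QuotientGroup.mk M

def Smat : GL2Z := ⟨!![0,1;1,0], !![0,1;1,0], by decide, by decide⟩
def Nmat : GL2Z := ⟨!![-1,0;0,1], !![-1,0;0,1], by decide, by decide⟩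
def Tmat : GL2Z := ⟨!![0,-1;1,0], !![0,1;-1,0], by decide, by decide⟩
def Umat : GL2Z := ⟨!![0,-1;1,1], !![1,1;-1,0], by decide, by decide⟩

lemma neg_one_mem_center' : (-1 : GL2Z) ∈ Subgroup.center GL2Z := by
  rw [Subgroup.mem_center_iff]; intro g; simp [mul_neg, neg_mul]

lemma center_eq' (M : GL2Z) : M ∈ Subgroup.center GL2Z ↔ M = 1 ∨ M = -1 := by
  constructor
  · intro h
    rw [Subgroup.mem_center_iff] at h
    have hS := congrArg Units.val (h Smat)
    have hT := congrArg Units.val (h Tmat)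
    rw [Units.val_mul, Units.val_mul] at hS hT
    have e1 := congrFun (congrFun hS 0) 0
    have e2 := congrFun (congrFun hS 0) 1
    have e3 := congrFun (congrFun hT 0) 0
    have e4 := congrFun (congrFun hT 0) 1
    have e5 := congrFun (congrFun hT 1) 0
    have e6 := congrFun (congrFun hT 1) 1
    rw [Matrix.eta_fin_two (M : Matrix (Fin 2) (Fin 2) ℤ)] at e1 e2 e3 e4 e5 e6
    simp [Smat, Tmat, Matrix.mul_fin_two] at e1 e2 e3 e4 e5 e6
    have hdet : IsUnit (M : Matrix (Fin 2) (Fin 2) ℤ).det :=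
      (Matrix.isUnit_iff_isUnit_det _).mp M.isUnit
    rw [Matrix.det_fin_two] at hdet
    have hd := Int.isUnit_iff.mp hdet
    have hb : (M : Matrix (Fin 2) (Fin 2) ℤ) 0 1 = 0 := by omega
    have hc : (M : Matrix (Fin 2) (Fin 2) ℤ) 1 0 = 0 := by omega
    have ha : (M : Matrix (Fin 2) (Fin 2) ℤ) 1 1 = (M : Matrix (Fin 2) (Fin 2) ℤ) 0 0 := by omega
    rw [hb, hc, ha] at hd
    simp only [mul_zero, sub_zero] at hd
    rcases hd with hd | hd
    · rcases mul_self_eq_one_iff.mp hd with h1 | h1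
      · left
        apply Units.ext
        rw [Matrix.eta_fin_two (M : Matrix (Fin 2) (Fin 2) ℤ), ha, hb, hc, h1]
        decide
      · right
        apply Units.ext
        rw [Matrix.eta_fin_two (M : Matrix (Fin 2) (Fin 2) ℤ), ha, hb, hc, h1]
        rw [Units.val_neg, Units.val_one]
        decide
    · exfalso
      nlinarith [mul_self_nonneg ((M : Matrix (Fin 2) (Fin 2) ℤ) 0 0)]
  · rintro (rfl | rfl)
    · exact Subgroup.one_mem _
    · exact neg_one_mem_center'

lemma cls_eq_iff (M M' : GL2Z) : cls M = cls M' ↔ M' = M ∨ M' = -M := by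
  unfold cls
  rw [QuotientGroup.eq, center_eq' (M⁻¹ * M')]
  constructor
  · rintro (h | h)
    · left; exact (eq_of_inv_mul_eq_one h).symm
    · right
      have := congrArg (fun x => M * x) h
      simpa [mul_assoc, mul_neg] using this
  · rintro (rfl | rfl)
    · left; simp
    · right; simp

lemma cls_eq_of_val_eq {M X : GL2Z} (h : (M : Matrix (Fin 2) (Fin 2) ℤ) = X) :
    cls M = cls X := by
  rw [cls_eq_iff]; left; exact (Units.ext h).symm

lemma cls_eq_of_val_eq_neg {M X : GL2Z}
    (h : (M : Matrix (Fin 2) (Fin 2) ℤ) = -(X : Matrix (Fin 2) (Fin 2) ℤ)) :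
    cls M = cls X := by
  rw [cls_eq_iff]; right
  have hM : M = -X := Units.ext (by simpa using h)
  rw [hM, neg_neg]

lemma cls_mul (A B : GL2Z) : cls A * cls B = cls (A * B) := rfl

lemma cls_one : cls 1 = 1 := rfl

-- multiplication table
lemma mul_ss : cls Smat * cls Smat = 1 := by
  rw [cls_mul, ← cls_one]; exact cls_eq_of_val_eq (by decide)
lemma mul_sn : cls Smat * cls Nmat = cls Tmat := by
  rw [cls_mul]; exact cls_eq_of_val_eq_neg (by decide)
lemma mul_st : cls Smat * cls Tmat = cls Nmat := by
  rw [cls_mul]; exact cls_eq_of_val_eq_neg (by decide)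
lemma mul_ns : cls Nmat * cls Smat = cls Tmat := by
  rw [cls_mul]; exact cls_eq_of_val_eq (by decide)
lemma mul_nn : cls Nmat * cls Nmat = 1 := by
  rw [cls_mul, ← cls_one]; exact cls_eq_of_val_eq (by decide)
lemma mul_nt : cls Nmat * cls Tmat = cls Smat := by
  rw [cls_mul]; exact cls_eq_of_val_eq (by decide)
lemma mul_ts : cls Tmat * cls Smat = cls Nmat := by
  rw [cls_mul]; exact cls_eq_of_val_eq (by decide)
lemma mul_tn : cls Tmat * cls Nmat = cls Smat := by
  rw [cls_mul]; exact cls_eq_of_val_eq_neg (by decide)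
lemma mul_tt : cls Tmat * cls Tmat = 1 := by
  rw [cls_mul, ← cls_one]; exact cls_eq_of_val_eq_neg (by decide)

/-- Elements commuting with [T] lie in {1,[S],[N],[T]}. -/
lemma mem_four (M : GL2Z) (h : cls M * cls Tmat = cls Tmat * cls M) :
    cls M = 1 ∨ cls M = cls Smat ∨ cls M = cls Nmat ∨ cls M = cls Tmat := by
  rw [cls_mul, cls_mul, cls_eq_iff] at h
  obtain ⟨a, b, c, d, hM⟩ : ∃ a b c d, (M : Matrix (Fin 2) (Fin 2) ℤ) = !![a, b; c, d] :=
    ⟨_, _, _, _, Matrix.eta_fin_two _⟩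
  have hdet : IsUnit (M : Matrix (Fin 2) (Fin 2) ℤ).det :=
    (Matrix.isUnit_iff_isUnit_det _).mp M.isUnit
  rw [hM, Matrix.det_fin_two_of] at hdet
  have hd := Int.isUnit_iff.mp hdet
  rcases h with h | h
  · -- T * M = M * T
    have hv := congrArg Units.val h
    rw [Units.val_mul, Units.val_mul, hM] at hv
    have e1 := congrFun (congrFun hv 0) 0
    have e2 := congrFun (congrFun hv 0) 1
    have e3 := congrFun (congrFun hv 1) 0
    have e4 := congrFun (congrFun hv 1) 1
    simp [Tmat, Matrix.mul_fin_two] at e1 e2 e3 e4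
    -- c = -b, d = a
    have hc : c = -b := by omega
    have hda : d = a := by omega
    rw [hc, hda] at hM
    rw [hc, hda] at hd
    have hsq : a * a + b * b = 1 := by
      rcases hd with hd | hd
      · nlinarith
      · exfalso; nlinarith [mul_self_nonneg a, mul_self_nonneg b]
    have ha1 : -1 ≤ a := by nlinarith
    have ha2 : a ≤ 1 := by nlinarith
    have hb1 : -1 ≤ b := by nlinarith
    have hb2 : b ≤ 1 := by nlinarith
    interval_cases a <;> interval_cases b <;> first
      | omega
      | (left; rw [← cls_one]; exact cls_eq_of_val_eq_neg (by rw [hM]; decide))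
      | (left; rw [← cls_one]; exact cls_eq_of_val_eq (by rw [hM]; decide))
      | (right; right; right; exact cls_eq_of_val_eq_neg (by rw [hM]; decide))
      | (right; right; right; exact cls_eq_of_val_eq (by rw [hM]; decide))
  · -- T * M = -(M * T)
    have hv := congrArg Units.val h
    rw [Units.val_neg, Units.val_mul, Units.val_mul, hM] at hv
    have e1 := congrFun (congrFun hv 0) 0
    have e2 := congrFun (congrFun hv 0) 1
    have e3 := congrFun (congrFun hv 1) 0
    have e4 := congrFun (congrFun hv 1) 1
    simp [Tmat, Matrix.mul_fin_two] at e1 e2 e3 e4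
    have hc : c = b := by omega
    have hda : d = -a := by omega
    rw [hc, hda] at hM
    rw [hc, hda] at hd
    have hsq : a * a + b * b = 1 := by
      rcases hd with hd | hd
      · exfalso; nlinarith [mul_self_nonneg a, mul_self_nonneg b]
      · nlinarith
    have ha1 : -1 ≤ a := by nlinarith
    have ha2 : a ≤ 1 := by nlinarith
    have hb1 : -1 ≤ b := by nlinarith
    have hb2 : b ≤ 1 := by nlinarith
    interval_cases a <;> interval_cases b <;> first
      | omega
      | (right; left; exact cls_eq_of_val_eq_neg (by rw [hM]; decide))
      | (right; left; exact cls_eq_of_val_eq (by rw [hM]; decide))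
      | (right; right; left; exact cls_eq_of_val_eq_neg (by rw [hM]; decide))
      | (right; right; left; exact cls_eq_of_val_eq (by rw [hM]; decide))

/-- The Klein four subgroup {1,[S],[N],[T]} as an explicit subgroup. -/
def K4 : Subgroup PGL2Z where
  carrier := {1, cls Smat, cls Nmat, cls Tmat}
  one_mem' := Or.inl rfl
  mul_mem' := by
    rintro x y (rfl | rfl | rfl | rfl) (rfl | rfl | rfl | rfl) <;>
      simp [mul_ss, mul_sn, mul_st, mul_ns, mul_nn, mul_nt, mul_ts, mul_tn, mul_tt,
        Set.mem_insert_iff]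
  inv_mem' := by
    rintro x (rfl | rfl | rfl | rfl)
    · simp [Set.mem_insert_iff]
    · rw [inv_eq_of_mul_eq_one_left mul_ss]; simp [Set.mem_insert_iff]
    · rw [inv_eq_of_mul_eq_one_left mul_nn]; simp [Set.mem_insert_iff]
    · rw [inv_eq_of_mul_eq_one_left mul_tt]; simp [Set.mem_insert_iff]

lemma K4_set_finite : ({1, cls Smat, cls Nmat, cls Tmat} : Set PGL2Z).Finite :=
  (((Set.finite_singleton (cls Tmat)).insert (cls Nmat)).insert (cls Smat)).insert 1

lemma K4_finite : Finite K4 := K4_set_finite.to_subtype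

lemma K4_card_le : Nat.card K4 ≤ 4 := by
  have h1 : Nat.card K4 = ({1, cls Smat, cls Nmat, cls Tmat} : Set PGL2Z).ncard :=
    Nat.card_coe_set_eq _
  rw [h1]
  have l1 := Set.ncard_insert_le (1 : PGL2Z) {cls Smat, cls Nmat, cls Tmat}
  have l2 := Set.ncard_insert_le (cls Smat) {cls Nmat, cls Tmat}
  have l3 := Set.ncard_insert_le (cls Nmat) {cls Tmat}
  have l4 : ({cls Tmat} : Set PGL2Z).ncard = 1 := Set.ncard_singleton _
  omega

/-- A subgroup of PGL(2,ℤ) of order 4 containing [T] equals G₄ = ⟨[S],[N]⟩. -/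
theorem stmt_10 (H : Subgroup PGL2Z) (hH : Nat.card H = 4) (hT : cls Tmat ∈ H) :
    H = Subgroup.closure {cls Smat, cls Nmat} := by
  have : Fact (Nat.Prime 2) := ⟨Nat.prime_two⟩
  have hcomm : ∀ a b : H, a * b = b * a :=
    IsPGroup.commutative_of_card_eq_prime_sq (p := 2) (by simpa using hH)
  have hHK : H ≤ K4 := by
    intro x hx
    obtain ⟨M, rfl⟩ : ∃ M, cls M = x := ⟨x.out, QuotientGroup.out_eq' x⟩
    have hcm := congrArg Subtype.val (hcomm ⟨cls M, hx⟩ ⟨cls Tmat, hT⟩)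
    have h4 := mem_four M hcm
    rcases h4 with h | h | h | h <;> rw [h] <;>
      exact (show _ ∈ ({1, cls Smat, cls Nmat, cls Tmat} : Set PGL2Z) by simp [Set.mem_insert_iff])
  have hfin : Finite K4 := K4_finite
  have hHK4 : H = K4 := Subgroup.eq_of_le_of_card_ge hHK (by rw [hH]; exact K4_card_le)
  have hKcl : K4 = Subgroup.closure {cls Smat, cls Nmat} := by
    apply le_antisymm
    · intro x hx
      rcases hx with rfl | rfl | rfl | rfl
      · exact Subgroup.one_mem _
      · exact Subgroup.subset_closure (Or.inl rfl)
      · exact Subgroup.subset_closure (Or.inr rfl)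
      · rw [← mul_sn]
        exact mul_mem (Subgroup.subset_closure (Or.inl rfl))
          (Subgroup.subset_closure (Or.inr rfl))
    · rw [Subgroup.closure_le]
      rintro x (rfl | rfl)
      · exact Or.inr (Or.inl rfl)
      · exact Or.inr (Or.inr (Or.inl rfl))
  rw [hHK4, hKcl]
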